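/- arXiv:math/0503227 — 2 statements merged into one kernel-verified Lean document; each statement's English description precedes it below -/
import Mathlib

section
/- Let z be the element of the group algebra of S_n given by the sum of all permutations with exactly n-r cycles, where 1 ≤ r < n. Then z equals the r-th elementary symmetric function of the Murphy elements R_2, ..., R_n, where R_i = Σ_{1≤j<i} (j,i). -/
open Finset

/-- The number of cycles of a permutation, including fixed points. -/
def numCycles {n : ℕ} (σ : Equiv.Perm (Fin n)) : ℕ :=
  σ.cycleType.card + (Finset.univ.filter fun i => σ i = i).card

/-- The Murphy element `R_i = ∑_{j<i} (j,i)` in the group algebra of `S_n`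
(indices `0,…,n-1`; `R_i` here corresponds to `R_{i+1}` in 1-indexed notation). -/
noncomputable def murphy (n : ℕ) (i : Fin n) : MonoidAlgebra ℤ (Equiv.Perm (Fin n)) :=
  ∑ j : Fin n, if j < i then MonoidAlgebra.single (Equiv.swap j i) 1 else 0

section JucysAux

lemma isCycle_mul_swap' {α : Type*} [Fintype α] [DecidableEq α] {c : Equiv.Perm α}
    (hc : c.IsCycle) {j m : α} (hj : c j ≠ j) (hm : c m = m) :
    (c * Equiv.swap j m).IsCycle := by
  have hccj : c (c j) ≠ c j := fun h => hj (c.injective h)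
  have hfp : (c.toList (c j)).formPerm = c := by
    rw [Equiv.Perm.formPerm_toList, hc.cycleOf_eq hccj]
  have hnd : (c.toList (c j)).Nodup := Equiv.Perm.nodup_toList c (c j)
  have hlen : 2 ≤ (c.toList (c j)).length :=
    Equiv.Perm.two_le_length_toList_iff_mem_support.mpr (Equiv.Perm.mem_support.mpr hccj)
  have hne : c.toList (c j) ≠ [] := by
    intro h; rw [h] at hlen; simp at hlen
  have hml : m ∉ c.toList (c j) := by
    intro hmem
    rw [Equiv.Perm.mem_toList_iff] at hmem
    obtain ⟨⟨i, hi⟩, -⟩ := hmem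
    have hfix : (c ^ i) m = m := Equiv.Perm.zpow_apply_eq_self_of_apply_eq_self hm i
    have hcjm : c j = m := (c ^ i).injective (hi.trans hfix.symm)
    rw [← hcjm] at hm
    exact hccj hm
  have hlast : (c.toList (c j)).getLast hne = j := by
    have hcard : (c.toList (c j)).length = c.support.card := by
      rw [Equiv.Perm.length_toList, hc.cycleOf_eq hccj]
    have h1 : (c.toList (c j)).getLast hne
        = (c.toList (c j)).get ⟨(c.toList (c j)).length - 1, by omega⟩ := by
      rw [List.getLast_eq_getElem]; simp
    rw [h1, List.get_eq_getElem, Equiv.Perm.getElem_toList]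
    have h2 : (c ^ ((c.toList (c j)).length - 1)) (c j)
        = (c ^ (c.toList (c j)).length) j := by
      rw [← Equiv.Perm.mul_apply, ← pow_succ]
      congr 2; omega
    rw [h2, hcard, ← hc.orderOf, pow_orderOf_eq_one]; rfl
  have hsplit : (c.toList (c j)).dropLast ++ [j] = c.toList (c j) := by
    conv_rhs => rw [← List.dropLast_append_getLast hne]
    rw [hlast]
  have key : c * Equiv.swap j m = (c.toList (c j) ++ [m]).formPerm := by
    have h2 : c.toList (c j) ++ [m] = (c.toList (c j)).dropLast ++ [j, m] := by
      rw [← hsplit]; simp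
    rw [h2, List.formPerm_append_pair, hsplit, hfp]
  rw [key]
  apply List.isCycle_formPerm
  · simp [List.nodup_append, hnd, hml]; exact fun a ha h => hml (h ▸ ha)
  · rw [List.length_append, List.length_singleton]; omega



lemma numCycles_mul_swap {n : ℕ} (τ : Equiv.Perm (Fin n)) {j m : Fin n} (hjm : j ≠ m)
    (hm : τ m = m) : numCycles (τ * Equiv.swap j m) + 1 = numCycles τ := by
  have hτjm : τ j ≠ m := fun h => hjm (τ.injective (h.trans hm.symm))
  have hfixiff : ∀ x, (τ * Equiv.swap j m) x = x ↔ (τ x = x ∧ x ≠ j ∧ x ≠ m) := by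
    intro x
    rcases eq_or_ne x j with rfl | hxj
    · simp only [Equiv.Perm.mul_apply, Equiv.swap_apply_left]
      constructor
      · intro h; exact absurd (hm.symm.trans h).symm hjm
      · tauto
    rcases eq_or_ne x m with rfl | hxm
    · simp only [Equiv.Perm.mul_apply, Equiv.swap_apply_right]
      constructor
      · intro h
        exact absurd (τ.injective (h.trans hm.symm)) hjm
      · tauto
    · simp only [Equiv.Perm.mul_apply, Equiv.swap_apply_of_ne_of_ne hxj hxm]
      tauto
  have hFσ : (Finset.univ.filter fun x => (τ * Equiv.swap j m) x = x)
      = ((Finset.univ.filter fun x => τ x = x) \ {j, m}) := by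
    ext x
    simp only [Finset.mem_filter, Finset.mem_univ, true_and, Finset.mem_sdiff,
      Finset.mem_insert, Finset.mem_singleton]
    rw [hfixiff x]
    tauto
  by_cases hj : τ j = j
  · -- disjoint case
    have hdisj : Equiv.Perm.Disjoint τ (Equiv.swap j m) := by
      intro x
      rcases eq_or_ne x j with rfl | hxj
      · exact Or.inl hj
      rcases eq_or_ne x m with rfl | hxm
      · exact Or.inl hm
      · exact Or.inr (Equiv.swap_apply_of_ne_of_ne hxj hxm)
    have hct : (τ * Equiv.swap j m).cycleType = τ.cycleType + (Equiv.swap j m).cycleType :=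
      hdisj.cycleType_mul
    have hcsw : (Equiv.swap j m).cycleType = {2} := by
      rw [(Equiv.Perm.isCycle_swap hjm).cycleType, Equiv.Perm.card_support_swap hjm]
    have hsub : ({j, m} : Finset (Fin n)) ⊆ Finset.univ.filter fun x => τ x = x := by
      intro x hx
      simp only [Finset.mem_insert, Finset.mem_singleton] at hx
      rcases hx with rfl | rfl <;> simp [hj, hm]
    have hcard2 : ({j, m} : Finset (Fin n)).card = 2 := by
      rw [Finset.card_insert_of_notMem (by simpa using hjm)]; rfl
    have hcards := Finset.card_sdiff_of_subset hsub
    have hle := Finset.card_le_card hsub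
    unfold numCycles
    rw [hFσ, hct, hcsw, hcards, hcard2]
    simp only [Multiset.card_add, Multiset.card_singleton]
    omega
  · -- merge case
    set c := τ.cycleOf j with hc
    have hcmem : c ∈ τ.cycleFactorsFinset :=
      Equiv.Perm.cycleOf_mem_cycleFactorsFinset_iff.mpr (Equiv.Perm.mem_support.mpr hj)
    have hdisj : Equiv.Perm.Disjoint (τ * c⁻¹) c :=
      Equiv.Perm.disjoint_mul_inv_of_mem_cycleFactorsFinset hcmem
    have hcyc : c.IsCycle := Equiv.Perm.isCycle_cycleOf τ hj
    have hcj : c j ≠ j := by rw [hc, Equiv.Perm.cycleOf_apply_self]; exact hj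
    have hcm : c m = m := by
      by_contra h
      have : m ∈ c.support := Equiv.Perm.mem_support.mpr h
      have : m ∈ τ.support := Equiv.Perm.support_cycleOf_le τ j this
      exact (Equiv.Perm.mem_support.mp this) hm
    have hcinvm : c⁻¹ m = m := by conv_lhs => rw [← hcm, ← Equiv.Perm.mul_apply, inv_mul_cancel, Equiv.Perm.one_apply]
    have hdm : (τ * c⁻¹) m = m := by rw [Equiv.Perm.mul_apply, hcinvm, hm]
    have hcyc' : (c * Equiv.swap j m).IsCycle := isCycle_mul_swap' hcyc hcj hcm
    have hdisj' : Equiv.Perm.Disjoint (τ * c⁻¹) (c * Equiv.swap j m) := by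
      intro x
      by_cases hxm : x = m
      · subst hxm; exact Or.inl hdm
      by_cases hxj : x = j
      · subst hxj
        rcases hdisj x with h | h
        · exact Or.inl h
        · exact absurd h hcj
      · rcases hdisj x with h | h
        · exact Or.inl h
        · exact Or.inr (by rw [Equiv.Perm.mul_apply, Equiv.swap_apply_of_ne_of_ne hxj hxm, h])
    have hτeq : τ = (τ * c⁻¹) * c := by rw [inv_mul_cancel_right]
    have hσeq : τ * Equiv.swap j m = (τ * c⁻¹) * (c * Equiv.swap j m) := by
      rw [← mul_assoc, inv_mul_cancel_right]
    have hct1 : τ.cycleType = (τ * c⁻¹).cycleType + c.cycleType := by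
      conv_lhs => rw [hτeq]
      exact hdisj.cycleType_mul
    have hct2 : (τ * Equiv.swap j m).cycleType
        = (τ * c⁻¹).cycleType + (c * Equiv.swap j m).cycleType := by
      rw [hσeq]; exact hdisj'.cycleType_mul
    have hc1 : c.cycleType.card = 1 := Equiv.Perm.card_cycleType_eq_one.mpr hcyc
    have hc2 : (c * Equiv.swap j m).cycleType.card = 1 :=
      Equiv.Perm.card_cycleType_eq_one.mpr hcyc'
    -- fixed points
    have hFτ : ((Finset.univ.filter fun x => τ x = x) \ {j, m})
        = (Finset.univ.filter fun x => τ x = x).erase m := by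
      ext x
      simp only [Finset.mem_sdiff, Finset.mem_erase, Finset.mem_filter, Finset.mem_univ,
        true_and, Finset.mem_insert, Finset.mem_singleton]
      constructor
      · rintro ⟨h1, h2⟩; exact ⟨fun h => h2 (Or.inr h), h1⟩
      · rintro ⟨h1, h2⟩
        refine ⟨h2, fun h => ?_⟩
        rcases h with rfl | rfl
        · exact hj h2
        · exact h1 rfl
    have hmmem : m ∈ Finset.univ.filter fun x : Fin n => τ x = x := by simp [hm]
    have hcards := Finset.card_erase_add_one hmmem
    unfold numCycles
    rw [hFσ, hFτ, hct2, hct1]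
    simp only [Multiset.card_add, hc1, hc2]
    omega


lemma numCycles_one {n : ℕ} : numCycles (1 : Equiv.Perm (Fin n)) = n := by
  unfold numCycles
  simp [Equiv.Perm.cycleType_one]

lemma fixed_eq_compl {n : ℕ} (σ : Equiv.Perm (Fin n)) :
    (Finset.univ.filter fun x => σ x = x) = σ.supportᶜ := by
  ext x; simp [Equiv.Perm.mem_support]

lemma numCycles_eq_n_iff {n : ℕ} {σ : Equiv.Perm (Fin n)} : numCycles σ = n ↔ σ = 1 := by
  constructor
  · intro h
    by_contra hσ
    have h1 : 0 < σ.cycleType.card := Equiv.Perm.card_cycleType_pos.mpr hσ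
    have h2 : σ.cycleType.card * 2 ≤ σ.cycleType.sum := by
      simpa using Multiset.card_nsmul_le_sum (fun x hx => Equiv.Perm.two_le_of_mem_cycleType hx)
    rw [Equiv.Perm.sum_cycleType] at h2
    have h3 : σ.support.card ≤ n := by
      simpa using Finset.card_le_univ σ.support
    rw [numCycles, fixed_eq_compl, Finset.card_compl] at h
    simp only [Fintype.card_fin] at h
    omega
  · rintro rfl; exact numCycles_one

lemma card_filter_ge {n m : ℕ} (hm : m ≤ n) :
    (Finset.univ.filter fun x : Fin n => m ≤ (x : ℕ)).card = n - m := by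
  have h1 : (Finset.univ.filter fun x : Fin n => (x : ℕ) < m)
      = Finset.image (Fin.castLE hm) Finset.univ := by
    ext x
    simp only [Finset.mem_filter, Finset.mem_univ, true_and, Finset.mem_image]
    constructor
    · intro h; exact ⟨⟨(x : ℕ), h⟩, by ext; rfl⟩
    · rintro ⟨y, rfl⟩; exact y.isLt
  have h2 : (Finset.univ.filter fun x : Fin n => (x : ℕ) < m).card = m := by
    rw [h1, Finset.card_image_of_injective _ (Fin.castLE_injective hm)]
    simp
  have h3 := Finset.card_filter_add_card_filter_not
    (s := (Finset.univ : Finset (Fin n))) (p := fun x : Fin n => (x : ℕ) < m)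
  simp only [not_lt, Finset.card_univ, Fintype.card_fin] at h3
  omega

lemma numCycles_lb {n m : ℕ} (hm : m ≤ n) {σ : Equiv.Perm (Fin n)}
    (h : ∀ x : Fin n, m ≤ (x : ℕ) → σ x = x) : n ≤ numCycles σ + m := by
  have hsub : (Finset.univ.filter fun x : Fin n => m ≤ (x : ℕ))
      ⊆ Finset.univ.filter fun x => σ x = x := by
    intro x hx
    simp only [Finset.mem_filter, Finset.mem_univ, true_and] at hx ⊢
    exact h x hx
  have := Finset.card_le_card hsub
  rw [card_filter_ge hm] at this
  unfold numCycles
  omega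

lemma sort_insert_max {n : ℕ} {a : Fin n} {s : Finset (Fin n)}
    (h1 : ∀ b ∈ s, b < a) (h2 : a ∉ s) :
    (insert a s).sort (· ≤ ·) = s.sort (· ≤ ·) ++ [a] := by
  haveI : IsAntisymm (Fin n) (· ≤ ·) := ⟨fun _ _ => le_antisymm⟩
  refine (fun hp h1 h2 => List.Perm.eq_of_pairwise' (r := (· ≤ ·)) (l₂ := s.sort (· ≤ ·) ++ [a]) h1 h2 hp) ?_ ?_ ?_
  · rw [← Multiset.coe_eq_coe]
    have e1 : ((insert a s).sort (· ≤ ·) : Multiset (Fin n)) = (insert a s).val :=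
      Finset.sort_eq _ _
    have e2 : ((s.sort (· ≤ ·) ++ [a] : List (Fin n)) : Multiset (Fin n))
        = s.val + {a} := by
      rw [← Multiset.coe_add, Finset.sort_eq, Multiset.coe_singleton]
    rw [e1, e2, Finset.insert_val, Multiset.ndinsert_of_notMem h2, add_comm,
      Multiset.singleton_add]
  · exact Finset.pairwise_sort _ _
  · rw [List.pairwise_append]
    refine ⟨Finset.pairwise_sort _ _, List.pairwise_singleton _ a, fun b hb c hc => ?_⟩
    simp only [List.mem_singleton] at hc
    subst hc
    exact le_of_lt (h1 b ((Finset.mem_sort _).mp hb))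








lemma card_filter_lt {n m : ℕ} (hm : m ≤ n) :
    (Finset.univ.filter fun x : Fin n => (x : ℕ) < m).card = m := by
  have h1 : (Finset.univ.filter fun x : Fin n => (x : ℕ) < m)
      = Finset.image (Fin.castLE hm) Finset.univ := by
    ext x
    simp only [Finset.mem_filter, Finset.mem_univ, true_and, Finset.mem_image]
    constructor
    · intro h; exact ⟨⟨(x : ℕ), h⟩, by ext; rfl⟩
    · rintro ⟨y, rfl⟩; exact y.isLt
  rw [h1, Finset.card_image_of_injective _ (Fin.castLE_injective hm)]
  simp

lemma lhs_r0 {n m : ℕ} :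
    (∑ σ ∈ Finset.univ.filter (fun σ : Equiv.Perm (Fin n) =>
        (∀ x : Fin n, m ≤ (x : ℕ) → σ x = x) ∧ numCycles σ + 0 = n),
        MonoidAlgebra.single σ (1 : ℤ)) = MonoidAlgebra.single 1 (1 : ℤ) := by
  have hfil : (Finset.univ.filter (fun σ : Equiv.Perm (Fin n) =>
      (∀ x : Fin n, m ≤ (x : ℕ) → σ x = x) ∧ numCycles σ + 0 = n)) = {1} := by
    ext σ
    simp only [Finset.mem_filter, Finset.mem_univ, true_and, Finset.mem_singleton, add_zero]
    constructor
    · rintro ⟨-, h2⟩; exact numCycles_eq_n_iff.mp h2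
    · rintro rfl; exact ⟨fun x _ => rfl, numCycles_one⟩
  rw [hfil, Finset.sum_singleton]

theorem claim (n : ℕ) : ∀ m, m ≤ n → ∀ r, r ≤ m →
    (∑ σ ∈ Finset.univ.filter (fun σ : Equiv.Perm (Fin n) =>
        (∀ x : Fin n, m ≤ (x : ℕ) → σ x = x) ∧ numCycles σ + r = n),
        MonoidAlgebra.single σ (1 : ℤ))
    = ∑ S ∈ (Finset.univ.filter fun i : Fin n => (i : ℕ) ≠ 0 ∧ (i : ℕ) < m).powersetCard r,
        ((S.sort (· ≤ ·)).map (murphy n)).prod := by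
  intro m
  induction m with
  | zero =>
    intro hm r hr
    obtain rfl : r = 0 := Nat.le_zero.mp hr
    rw [lhs_r0]
    have hT : (Finset.univ.filter fun i : Fin n => (i : ℕ) ≠ 0 ∧ (i : ℕ) < 0) = ∅ := by
      ext i; simp
    rw [hT, Finset.powersetCard_zero, Finset.sum_singleton, Finset.sort_empty]
    simp [MonoidAlgebra.one_def]
  | succ m ih =>
    intro hm1 r hr
    have hmn : m < n := hm1
    have hmle : m ≤ n := le_of_lt hmn
    set a : Fin n := ⟨m, hmn⟩ with ha_def
    have haval : (a : ℕ) = m := rfl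
    rcases Nat.eq_zero_or_pos r with rfl | hrpos
    · -- r = 0
      rw [lhs_r0]
      rw [Finset.powersetCard_zero, Finset.sum_singleton, Finset.sort_empty]
      simp [MonoidAlgebra.one_def]
    obtain ⟨k, rfl⟩ : ∃ k, r = k + 1 := ⟨r - 1, by omega⟩
    -- notation
    set T : Finset (Fin n) := Finset.univ.filter fun i : Fin n => (i : ℕ) ≠ 0 ∧ (i : ℕ) < m
      with hT_def
    set T' : Finset (Fin n) :=
      Finset.univ.filter fun i : Fin n => (i : ℕ) ≠ 0 ∧ (i : ℕ) < m + 1 with hT'_def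
    have hcardT : T.card ≤ m := by
      have : T ⊆ Finset.univ.filter fun x : Fin n => (x : ℕ) < m := by
        intro i hi
        simp only [hT_def, Finset.mem_filter, Finset.mem_univ, true_and] at hi ⊢
        exact hi.2
      have := Finset.card_le_card this
      rwa [card_filter_lt hmle] at this
    -- Step 1 : split LHS
    have hsplit := Finset.sum_filter_add_sum_filter_not
      (Finset.univ.filter (fun σ : Equiv.Perm (Fin n) =>
        (∀ x : Fin n, m + 1 ≤ (x : ℕ) → σ x = x) ∧ numCycles σ + (k + 1) = n))
      (fun σ => σ a = a) (fun σ => MonoidAlgebra.single σ (1 : ℤ))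
    rw [Finset.filter_filter, Finset.filter_filter] at hsplit
    have hcondA : (Finset.univ.filter (fun σ : Equiv.Perm (Fin n) =>
        ((∀ x : Fin n, m + 1 ≤ (x : ℕ) → σ x = x) ∧ numCycles σ + (k + 1) = n) ∧ σ a = a))
        = Finset.univ.filter (fun σ : Equiv.Perm (Fin n) =>
        (∀ x : Fin n, m ≤ (x : ℕ) → σ x = x) ∧ numCycles σ + (k + 1) = n) := by
      apply Finset.filter_congr
      intro σ _
      constructor
      · rintro ⟨⟨h1, h2⟩, h3⟩
        refine ⟨fun x hx => ?_, h2⟩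
        rcases Nat.eq_or_lt_of_le hx with hx' | hx'
        · have : x = a := by ext; exact hx'.symm
          rw [this]; exact h3
        · exact h1 x hx'
      · rintro ⟨h1, h2⟩
        exact ⟨⟨fun x hx => h1 x (by omega), h2⟩, h1 a (le_of_eq haval.symm)⟩
    rw [hcondA] at hsplit
    -- Step 2 : the fixed part equals the r-subsets of T part
    have hA : (∑ σ ∈ Finset.univ.filter (fun σ : Equiv.Perm (Fin n) =>
          (∀ x : Fin n, m ≤ (x : ℕ) → σ x = x) ∧ numCycles σ + (k + 1) = n),
          MonoidAlgebra.single σ (1 : ℤ))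
        = ∑ S ∈ T.powersetCard (k + 1), ((S.sort (· ≤ ·)).map (murphy n)).prod := by
      by_cases hrm : k + 1 ≤ m
      · exact ih hmle (k + 1) hrm
      · have h1 : (Finset.univ.filter (fun σ : Equiv.Perm (Fin n) =>
            (∀ x : Fin n, m ≤ (x : ℕ) → σ x = x) ∧ numCycles σ + (k + 1) = n)) = ∅ := by
          ext σ
          simp only [Finset.mem_filter, Finset.mem_univ, true_and, Finset.notMem_empty,
            iff_false, not_and]
          intro h1 h2
          have := numCycles_lb hmle h1
          omega
        have h2 : T.powersetCard (k + 1) = ∅ := by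
          rw [Finset.powersetCard_eq_empty]
          omega
        rw [h1, h2, Finset.sum_empty, Finset.sum_empty]
    -- Step 3 : the moving part equals (sum over smaller sets) * murphy a
    have hB : (∑ σ ∈ Finset.univ.filter (fun σ : Equiv.Perm (Fin n) =>
          ((∀ x : Fin n, m + 1 ≤ (x : ℕ) → σ x = x) ∧ numCycles σ + (k + 1) = n) ∧ ¬σ a = a),
          MonoidAlgebra.single σ (1 : ℤ))
        = (∑ σ' ∈ Finset.univ.filter (fun σ' : Equiv.Perm (Fin n) =>
          (∀ x : Fin n, m ≤ (x : ℕ) → σ' x = x) ∧ numCycles σ' + k = n),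
          MonoidAlgebra.single σ' (1 : ℤ)) * murphy n a := by
      have step1 : ∀ σ' : Equiv.Perm (Fin n), MonoidAlgebra.single σ' (1 : ℤ) * murphy n a
          = ∑ j ∈ Finset.univ.filter (· < a),
              MonoidAlgebra.single (σ' * Equiv.swap j a) (1 : ℤ) := by
        intro σ'
        rw [murphy, Finset.mul_sum]
        simp only [mul_ite, mul_zero, MonoidAlgebra.single_mul_single, one_mul, mul_one]
        exact (Finset.sum_filter _ _).symm
      rw [Finset.sum_mul, Finset.sum_congr rfl (fun σ' _ => step1 σ'), ← Finset.sum_product']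
      apply Finset.sum_nbij' (i := fun σ => (σ * Equiv.swap (σ⁻¹ a) a, σ⁻¹ a))
        (j := fun p => p.1 * Equiv.swap p.2 a)
      · -- hi : forward membership
        intro σ hσ
        simp only [Finset.mem_filter, Finset.mem_univ, true_and] at hσ
        obtain ⟨⟨hfix, hnc⟩, hmove⟩ := hσ
        have hj0 : σ (σ⁻¹ a) = a := Equiv.apply_symm_apply σ a
        have hj0a : σ⁻¹ a ≠ a := by
          intro h; rw [h] at hj0; exact hmove hj0
        have hj0lt : ((σ⁻¹ a : Fin n) : ℕ) < m + 1 := by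
          by_contra h
          push_neg at h
          have := hfix _ h
          rw [this] at hj0
          exact hj0a hj0
        have hj0m : ((σ⁻¹ a : Fin n) : ℕ) ≠ m := by
          intro h
          exact hj0a (by ext; exact h)
        have hj0a' : σ⁻¹ a < a := by
          rw [Fin.lt_def, haval]; omega
        have hfix' : σ * Equiv.swap (σ⁻¹ a) a * Equiv.swap (σ⁻¹ a) a = σ := by
          rw [mul_assoc, Equiv.swap_mul_self, mul_one]
        have hσ'a : (σ * Equiv.swap (σ⁻¹ a) a) a = a := by
          rw [Equiv.Perm.mul_apply, Equiv.swap_apply_right, hj0]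
        have hnc' := numCycles_mul_swap (σ * Equiv.swap (σ⁻¹ a) a) hj0a hσ'a
        rw [hfix'] at hnc'
        simp only [Finset.mem_product, Finset.mem_filter, Finset.mem_univ, true_and]
        refine ⟨⟨fun x hx => ?_, by omega⟩, hj0a'⟩
        rcases Nat.eq_or_lt_of_le hx with hx' | hx'
        · have : x = a := by ext; exact hx'.symm
          rw [this]; exact hσ'a
        · have hxa : x ≠ a := by
            intro h; rw [h, haval] at hx'; exact lt_irrefl m hx'
          have hxj : x ≠ σ⁻¹ a := by
            intro h; rw [← h] at hj0lt; omega
          rw [Equiv.Perm.mul_apply, Equiv.swap_apply_of_ne_of_ne hxj hxa]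
          exact hfix x (by omega)
      · -- hj : backward membership
        rintro ⟨σ', j⟩ hp
        simp only [Finset.mem_product, Finset.mem_filter, Finset.mem_univ, true_and] at hp
        obtain ⟨⟨hfix', hnc'⟩, hja⟩ := hp
        have hja' : j ≠ a := ne_of_lt hja
        have hjval : (j : ℕ) < m := by
          have := hja; rw [Fin.lt_def, haval] at this; exact this
        have hσ'a : σ' a = a := hfix' a (le_of_eq haval.symm)
        have hσj : (σ' * Equiv.swap j a) a = σ' j := by
          rw [Equiv.Perm.mul_apply, Equiv.swap_apply_right]
        have hmove : (σ' * Equiv.swap j a) a ≠ a := by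
          rw [hσj]
          intro h
          exact hja' (σ'.injective (h.trans hσ'a.symm))
        have hnc2 := numCycles_mul_swap σ' hja' hσ'a
        simp only [Finset.mem_filter, Finset.mem_univ, true_and]
        refine ⟨⟨fun x hx => ?_, by omega⟩, hmove⟩
        have hxa : x ≠ a := by
          intro h; rw [h, haval] at hx; omega
        have hxj : x ≠ j := by
          intro h; rw [h] at hx; omega
        rw [Equiv.Perm.mul_apply, Equiv.swap_apply_of_ne_of_ne hxj hxa]
        exact hfix' x (by omega)
      · -- left inverse
        intro σ hσ
        simp only
        rw [mul_assoc, Equiv.swap_mul_self, mul_one]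
      · -- right inverse
        rintro ⟨σ', j⟩ hp
        simp only [Finset.mem_product, Finset.mem_filter, Finset.mem_univ, true_and] at hp
        obtain ⟨⟨hfix', -⟩, hja⟩ := hp
        have hσ'a : σ' a = a := hfix' a (le_of_eq haval.symm)
        have hinv : (σ' * Equiv.swap j a)⁻¹ a = j := by
          apply (σ' * Equiv.swap j a).injective
          rw [← Equiv.Perm.mul_apply, mul_inv_cancel, Equiv.Perm.one_apply, Equiv.Perm.mul_apply, Equiv.swap_apply_left, hσ'a]
        have h1 : (σ' * Equiv.swap j a) * Equiv.swap ((σ' * Equiv.swap j a)⁻¹ a) a = σ' := by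
          rw [hinv, mul_assoc, Equiv.swap_mul_self, mul_one]
        exact Prod.ext h1 hinv
      · -- values
        intro σ hσ
        simp only
        rw [mul_assoc, Equiv.swap_mul_self, mul_one]
    -- Step 4 : RHS split
    have hRHS : (∑ S ∈ T'.powersetCard (k + 1), ((S.sort (· ≤ ·)).map (murphy n)).prod)
        = (∑ S ∈ T.powersetCard (k + 1), ((S.sort (· ≤ ·)).map (murphy n)).prod)
          + (∑ S ∈ T.powersetCard k, ((S.sort (· ≤ ·)).map (murphy n)).prod) * murphy n a := by
      by_cases hm0 : m = 0
      · -- degenerate : T' = T = ∅, murphy n a = 0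
        subst hm0
        have hT'e : T' = ∅ := by
          ext i
          simp only [hT'_def, Finset.mem_filter, Finset.mem_univ, true_and,
            Finset.notMem_empty, iff_false, not_and]
          intro h1 h2
          omega
        have hTe : T = ∅ := by
          ext i
          simp only [hT_def, Finset.mem_filter, Finset.mem_univ, true_and,
            Finset.notMem_empty, iff_false, not_and]
          intro h1 h2
          omega
        have hmur : murphy n a = 0 := by
          rw [murphy]
          apply Finset.sum_eq_zero
          intro j _
          rw [if_neg]
          intro h
          rw [Fin.lt_def, haval] at h
          omega
        rw [hT'e, hTe, hmur, mul_zero, add_zero]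
      · have ham : a ∉ T := by
          simp only [hT_def, Finset.mem_filter, Finset.mem_univ, true_and, haval, not_and]
          intro; omega
        have hT'i : T' = insert a T := by
          ext i
          simp only [hT'_def, hT_def, Finset.mem_filter, Finset.mem_univ, true_and,
            Finset.mem_insert]
          constructor
          · rintro ⟨h1, h2⟩
            rcases Nat.eq_or_lt_of_le (Nat.lt_succ_iff.mp h2) with h3 | h3
            · left; ext; rw [haval]; exact h3
            · right; exact ⟨h1, h3⟩
          · rintro (rfl | ⟨h1, h2⟩)
            · exact ⟨by rw [haval]; omega, by rw [haval]; omega⟩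
            · exact ⟨h1, by omega⟩
        rw [hT'i, Finset.powersetCard_succ_insert ham]
        rw [Finset.sum_union]
        · congr 1
          rw [Finset.sum_image]
          · rw [Finset.sum_mul]
            apply Finset.sum_congr rfl
            intro S hS
            have hST : S ⊆ T := (Finset.mem_powersetCard.mp hS).1
            have haS : a ∉ S := fun h => ham (hST h)
            have hlt : ∀ b ∈ S, b < a := by
              intro b hb
              have := hST hb
              simp only [hT_def, Finset.mem_filter] at this
              rw [Fin.lt_def, haval]
              exact this.2.2
            rw [sort_insert_max hlt haS, List.map_append, List.prod_append]
            simp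
          · intro S hS S' hS' h
            have haS : a ∉ S := fun hx => ham ((Finset.mem_powersetCard.mp hS).1 hx)
            have haS' : a ∉ S' := fun hx => ham ((Finset.mem_powersetCard.mp hS').1 hx)
            rw [← Finset.erase_insert haS, h, Finset.erase_insert haS']
        · rw [Finset.disjoint_left]
          intro S hS hS'
          have haS : a ∉ S := fun hx => ham ((Finset.mem_powersetCard.mp hS).1 hx)
          rw [Finset.mem_image] at hS'
          obtain ⟨S'', -, rfl⟩ := hS'
          exact haS (Finset.mem_insert_self a S'')
    rw [← hsplit, hA, hB, ih hmle k (by omega), hRHS]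

end JucysAux

/-- For `1 ≤ r < n`, the element of the group algebra of `S_n` given by the sum of all
permutations with exactly `n - r` cycles equals the `r`-th elementary symmetric function
of the Murphy elements `R_2, …, R_n` (the product over each `r`-subset being taken in
increasing order of index; the Murphy elements commute pairwise). -/
theorem stmt5 (n r : ℕ) (hr : 1 ≤ r) (hrn : r < n) :
    (∑ σ : Equiv.Perm (Fin n),
        if numCycles σ = n - r then MonoidAlgebra.single σ (1 : ℤ) else 0)
      = ∑ S ∈ (Finset.univ.filter fun i : Fin n => (i : ℕ) ≠ 0).powersetCard r,
          ((S.sort (· ≤ ·)).map (murphy n)).prod := by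
  have h := claim n n le_rfl r (le_of_lt hrn)
  have hL : (∑ σ : Equiv.Perm (Fin n),
      if numCycles σ = n - r then MonoidAlgebra.single σ (1 : ℤ) else 0)
      = ∑ σ ∈ Finset.univ.filter (fun σ : Equiv.Perm (Fin n) =>
          (∀ x : Fin n, n ≤ (x : ℕ) → σ x = x) ∧ numCycles σ + r = n),
          MonoidAlgebra.single σ (1 : ℤ) := by
    rw [Finset.sum_filter]
    apply Finset.sum_congr rfl
    intro σ _
    congr 1
    simp only [eq_iff_iff]
    constructor
    · intro hc
      refine ⟨fun x hx => absurd x.isLt (by omega), by omega⟩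
    · rintro ⟨-, hc⟩
      omega
  have hR : (Finset.univ.filter fun i : Fin n => (i : ℕ) ≠ 0)
      = Finset.univ.filter fun i : Fin n => (i : ℕ) ≠ 0 ∧ (i : ℕ) < n := by
    ext i
    simp only [Finset.mem_filter, Finset.mem_univ, true_and]
    exact ⟨fun hi => ⟨hi, i.isLt⟩, fun hi => hi.1⟩
  rw [hL, hR, h]
end

section
/- Under Kerov's growth process, for any partition λ(n-1) of n-1 ≥ 1, the conditional expectation of X_n given λ(n-1) equals 0, i.e., Σ_{x addable to λ(n-1)} [dim(λ(n-1)+x)/(n·dim(λ(n-1)))]·c(x) = 0. -/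
open Finset

/-- The Young diagram of a partition of `n` (rows sorted in decreasing order). -/
def toYD {n : ℕ} (p : n.Partition) : YoungDiagram :=
  YoungDiagram.ofRowLens (p.parts.sort (· ≥ ·)) (List.sortedGE_iff_pairwise.mpr (p.parts.pairwise_sort _))

/-- The content of a box in (0-indexed) row `c.1` and column `c.2`: column minus row. -/
def content (c : ℕ × ℕ) : ℤ := (c.2 : ℤ) - c.1

/-- The hook length of a box: 1 + arm + leg. -/
def hook (μ : YoungDiagram) (c : ℕ × ℕ) : ℕ :=
  (μ.cells.filter (fun d => d.1 = c.1 ∧ c.2 < d.2)).card +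
  (μ.cells.filter (fun d => d.2 = c.2 ∧ c.1 < d.1)).card + 1

/-- The dimension of the irreducible representation of `S_n` indexed by `μ`,
given by the hook length formula `n! / ∏ h(x)`. -/
def dimSYT (μ : YoungDiagram) : ℚ :=
  (Nat.factorial μ.card : ℚ) / ∏ c ∈ μ.cells, (hook μ c : ℚ)

/-- The Plancherel measure of a partition `μ` of `n`: `dim(μ)² / n!`. -/
def plancherel (n : ℕ) (μ : YoungDiagram) : ℚ := dimSYT μ ^ 2 / n.factorial

lemma arm_card (ν : YoungDiagram) (i k : ℕ) :
    (ν.cells.filter (fun d => d.1 = i ∧ k < d.2)).card = ν.rowLen i - (k+1) := by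
  have hset : ν.cells.filter (fun d => d.1 = i ∧ k < d.2)
      = {i} ×ˢ Finset.Ico (k+1) (ν.rowLen i) := by
    ext ⟨a,b⟩
    simp only [Finset.mem_filter, YoungDiagram.mem_cells, Finset.mem_product,
      Finset.mem_singleton, Finset.mem_Ico]
    constructor
    · rintro ⟨hm, rfl, hk⟩
      exact ⟨rfl, hk, (YoungDiagram.mem_iff_lt_rowLen).mp hm⟩
    · rintro ⟨rfl, hk, hr⟩
      exact ⟨(YoungDiagram.mem_iff_lt_rowLen).mpr hr, rfl, hk⟩
  rw [hset, Finset.card_product, Finset.card_singleton, Nat.card_Ico, one_mul]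

lemma leg_card (ν : YoungDiagram) (i k : ℕ) :
    (ν.cells.filter (fun d => d.2 = k ∧ i < d.1)).card = ν.colLen k - (i+1) := by
  have hset : ν.cells.filter (fun d => d.2 = k ∧ i < d.1)
      = Finset.Ico (i+1) (ν.colLen k) ×ˢ {k} := by
    ext ⟨a,b⟩
    simp only [Finset.mem_filter, YoungDiagram.mem_cells, Finset.mem_product,
      Finset.mem_singleton, Finset.mem_Ico]
    constructor
    · rintro ⟨hm, rfl, hk⟩
      exact ⟨⟨hk, (YoungDiagram.mem_iff_lt_colLen).mp hm⟩, rfl⟩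
    · rintro ⟨⟨hk, hr⟩, rfl⟩
      exact ⟨(YoungDiagram.mem_iff_lt_colLen).mpr hr, rfl, hk⟩
  rw [hset, Finset.card_product, Finset.card_singleton, Nat.card_Ico, mul_one]

lemma hook_eq (ν : YoungDiagram) (i k : ℕ) :
    hook ν (i, k) = (ν.rowLen i - (k+1)) + (ν.colLen k - (i+1)) + 1 := by
  rw [show hook ν (i,k) = (ν.cells.filter (fun d => d.1 = i ∧ k < d.2)).card +
    (ν.cells.filter (fun d => d.2 = k ∧ i < d.1)).card + 1 from rfl,
    arm_card, leg_card]

/-- shifted first-column coordinates -/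
def Lf (ν : YoungDiagram) (m i : ℕ) : ℕ := ν.rowLen i + (m - 1 - i)

def Tf (ν : YoungDiagram) (m i k : ℕ) : ℕ :=
  k + #((Finset.Ico (i+1) m).filter (fun j => ν.rowLen j ≤ k))

lemma Lf_lt (ν : YoungDiagram) (m : ℕ) {a b : ℕ} (hab : a < b) (hb : b < m) :
    Lf ν m b < Lf ν m a := by
  have := ν.rowLen_anti a b (le_of_lt hab)
  unfold Lf; omega

lemma colLen_filter_card (ν : YoungDiagram) (m i k : ℕ) (hm : ν.colLen k ≤ m) :
    #((Finset.Ico (i+1) m).filter (fun j => k < ν.rowLen j)) = ν.colLen k - (i+1) := by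
  have hset : (Finset.Ico (i+1) m).filter (fun j => k < ν.rowLen j)
      = Finset.Ico (i+1) (ν.colLen k) := by
    ext j
    simp only [Finset.mem_filter, Finset.mem_Ico]
    have : k < ν.rowLen j ↔ j < ν.colLen k := by
      rw [← YoungDiagram.mem_iff_lt_rowLen, ← YoungDiagram.mem_iff_lt_colLen]
    rw [this]
    omega
  rw [hset, Nat.card_Ico]

lemma hook_T (ν : YoungDiagram) (m i k : ℕ) (hm : ν.colLen 0 ≤ m) (hi : i < m)
    (hcell : (i, k) ∈ ν) :
    Tf ν m i k < Lf ν m i ∧ hook ν (i, k) = Lf ν m i - Tf ν m i k := by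
  have hck : ν.colLen k ≤ m := le_trans (ν.colLen_anti 0 k (Nat.zero_le _)) hm
  have hic : i < ν.colLen k := YoungDiagram.mem_iff_lt_colLen.mp hcell
  have hkr : k < ν.rowLen i := YoungDiagram.mem_iff_lt_rowLen.mp hcell
  have hsplit := Finset.card_filter_add_card_filter_not
    (s := Finset.Ico (i+1) m) (p := fun j => k < ν.rowLen j)
  have hneg : (Finset.Ico (i+1) m).filter (fun j => ¬ k < ν.rowLen j)
      = (Finset.Ico (i+1) m).filter (fun j => ν.rowLen j ≤ k) := by
    apply Finset.filter_congr; intro j _; simp [not_lt]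
  rw [hneg, colLen_filter_card ν m i k hck, Nat.card_Ico] at hsplit
  rw [hook_eq]
  unfold Tf Lf
  omega

lemma Tf_ne (ν : YoungDiagram) (m i k j : ℕ) (hij : i < j) (hj : j < m) :
    Tf ν m i k ≠ Lf ν m j := by
  by_cases h : ν.rowLen j ≤ k
  · have hsub : Finset.Ico j m ⊆ (Finset.Ico (i+1) m).filter (fun j' => ν.rowLen j' ≤ k) := by
      intro j' hj'
      rw [Finset.mem_Ico] at hj'
      rw [Finset.mem_filter, Finset.mem_Ico]
      exact ⟨⟨by omega, hj'.2⟩, le_trans (ν.rowLen_anti j j' hj'.1) h⟩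
    have hcard := Finset.card_le_card hsub
    rw [Nat.card_Ico] at hcard
    unfold Tf Lf
    omega
  · have hsub : (Finset.Ico (i+1) m).filter (fun j' => ν.rowLen j' ≤ k)
        ⊆ Finset.Ico (j+1) m := by
      intro j' hj'
      rw [Finset.mem_filter, Finset.mem_Ico] at hj'
      rw [Finset.mem_Ico]
      refine ⟨?_, hj'.1.2⟩
      by_contra hc
      exact absurd (le_trans (ν.rowLen_anti j' j (by omega)) hj'.2) h
    have hcard := Finset.card_le_card hsub
    rw [Nat.card_Ico] at hcard
    unfold Tf Lf
    omega

lemma Tf_injOn (ν : YoungDiagram) (m i : ℕ) {k1 k2 : ℕ} (h12 : k1 < k2) :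
    Tf ν m i k1 < Tf ν m i k2 := by
  have hsub : (Finset.Ico (i+1) m).filter (fun j => ν.rowLen j ≤ k1)
      ⊆ (Finset.Ico (i+1) m).filter (fun j => ν.rowLen j ≤ k2) := by
    intro x hx
    rw [Finset.mem_filter] at hx ⊢
    exact ⟨hx.1, by omega⟩
  have := Finset.card_le_card hsub
  unfold Tf
  omega

lemma Tf_image (ν : YoungDiagram) (m i : ℕ) (hm : ν.colLen 0 ≤ m) (hi : i < m) :
    (Finset.range (ν.rowLen i)).image (Tf ν m i)
      = Finset.range (Lf ν m i) \ ((Finset.Ico (i+1) m).image (Lf ν m)) := by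
  have hLinj : Set.InjOn (Lf ν m) (Finset.Ico (i+1) m) := by
    intro a ha b hb hab
    simp only [Finset.coe_Ico, Set.mem_Ico] at ha hb
    rcases lt_trichotomy a b with h | h | h
    · exact absurd hab (Nat.ne_of_gt (Lf_lt ν m h hb.2))
    · exact h
    · exact absurd hab (Nat.ne_of_lt (Lf_lt ν m h ha.2))
  have hTinj : Set.InjOn (Tf ν m i) (Finset.range (ν.rowLen i)) := by
    intro a _ b _ hab
    rcases lt_trichotomy a b with h | h | h
    · exact absurd hab (Nat.ne_of_lt (Tf_injOn ν m i h))
    · exact h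
    · exact absurd hab (Nat.ne_of_gt (Tf_injOn ν m i h))
  apply Finset.eq_of_subset_of_card_le
  · intro t ht
    rw [Finset.mem_image] at ht
    obtain ⟨k, hk, rfl⟩ := ht
    rw [Finset.mem_range] at hk
    have hcell : (i, k) ∈ ν := YoungDiagram.mem_iff_lt_rowLen.mpr hk
    rw [Finset.mem_sdiff, Finset.mem_range]
    constructor
    · exact (hook_T ν m i k hm hi hcell).1
    · rw [Finset.mem_image]
      rintro ⟨j, hj, hjeq⟩
      rw [Finset.mem_Ico] at hj
      exact Tf_ne ν m i k j hj.1 hj.2 hjeq.symm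
  · have hLsub : (Finset.Ico (i+1) m).image (Lf ν m) ⊆ Finset.range (Lf ν m i) := by
      intro t ht
      rw [Finset.mem_image] at ht
      obtain ⟨j, hj, rfl⟩ := ht
      rw [Finset.mem_Ico] at hj
      rw [Finset.mem_range]
      exact Lf_lt ν m (by omega) hj.2
    rw [Finset.card_sdiff_of_subset hLsub, Finset.card_image_of_injOn hLinj,
      Finset.card_image_of_injOn hTinj, Finset.card_range, Finset.card_range, Nat.card_Ico]
    unfold Lf
    omega

lemma desc_prod (N : ℕ) : ∏ t ∈ Finset.range N, (N - t) = Nat.factorial N := by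
  rw [← Finset.prod_range_add_one_eq_factorial, ← Finset.prod_range_reflect]
  apply Finset.prod_congr rfl
  intro t ht
  rw [Finset.mem_range] at ht
  omega

lemma row_prod (ν : YoungDiagram) (m i : ℕ) (hm : ν.colLen 0 ≤ m) (hi : i < m) :
    (∏ k ∈ Finset.range (ν.rowLen i), hook ν (i, k)) *
      (∏ j ∈ Finset.Ico (i+1) m, (Lf ν m i - Lf ν m j)) = Nat.factorial (Lf ν m i) := by
  have hTinj : Set.InjOn (Tf ν m i) (Finset.range (ν.rowLen i)) := by
    intro a _ b _ hab
    rcases lt_trichotomy a b with h | h | h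
    · exact absurd hab (Nat.ne_of_lt (Tf_injOn ν m i h))
    · exact h
    · exact absurd hab (Nat.ne_of_gt (Tf_injOn ν m i h))
  have hLinj : Set.InjOn (Lf ν m) (Finset.Ico (i+1) m) := by
    intro a ha b hb hab
    simp only [Finset.coe_Ico, Set.mem_Ico] at ha hb
    rcases lt_trichotomy a b with h | h | h
    · exact absurd hab (Nat.ne_of_gt (Lf_lt ν m h hb.2))
    · exact h
    · exact absurd hab (Nat.ne_of_lt (Lf_lt ν m h ha.2))
  have h1 : ∏ k ∈ Finset.range (ν.rowLen i), hook ν (i, k)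
      = ∏ t ∈ (Finset.range (ν.rowLen i)).image (Tf ν m i), (Lf ν m i - t) := by
    rw [Finset.prod_image hTinj]
    apply Finset.prod_congr rfl
    intro k hk
    rw [Finset.mem_range] at hk
    exact (hook_T ν m i k hm hi (YoungDiagram.mem_iff_lt_rowLen.mpr hk)).2
  have h2 : ∏ j ∈ Finset.Ico (i+1) m, (Lf ν m i - Lf ν m j)
      = ∏ t ∈ (Finset.Ico (i+1) m).image (Lf ν m), (Lf ν m i - t) := by
    rw [Finset.prod_image hLinj]
  have hLsub : (Finset.Ico (i+1) m).image (Lf ν m) ⊆ Finset.range (Lf ν m i) := by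
    intro t ht
    rw [Finset.mem_image] at ht
    obtain ⟨j, hj, rfl⟩ := ht
    rw [Finset.mem_Ico] at hj
    rw [Finset.mem_range]
    exact Lf_lt ν m (by omega) hj.2
  rw [h1, h2, Tf_image ν m i hm hi, Finset.prod_sdiff hLsub, desc_prod]

lemma cells_decomp (ν : YoungDiagram) (m : ℕ) (hm : ν.colLen 0 ≤ m) :
    ν.cells = (Finset.range m).biUnion (fun i => {i} ×ˢ Finset.range (ν.rowLen i)) := by
  ext ⟨a, b⟩
  simp only [Finset.mem_biUnion, Finset.mem_range, Finset.mem_product,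
    Finset.mem_singleton, YoungDiagram.mem_cells]
  constructor
  · intro h
    have ha : a < ν.colLen 0 :=
      YoungDiagram.mem_iff_lt_colLen.mp (ν.up_left_mem le_rfl (Nat.zero_le b) h)
    exact ⟨a, by omega, rfl, YoungDiagram.mem_iff_lt_rowLen.mp h⟩
  · rintro ⟨i, _, rfl, hb⟩
    exact YoungDiagram.mem_iff_lt_rowLen.mpr hb

lemma rows_disj (ν : YoungDiagram) (m : ℕ) :
    ∀ x ∈ Finset.range m, ∀ y ∈ Finset.range m, x ≠ y →
      Disjoint ({x} ×ˢ Finset.range (ν.rowLen x)) ({y} ×ˢ Finset.range (ν.rowLen y)) := by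
  intro a _ b _ hab
  apply Finset.disjoint_left.mpr
  rintro ⟨x, y⟩ hx hy
  simp only [Finset.mem_product, Finset.mem_singleton] at hx hy
  exact hab (hx.1 ▸ hy.1 ▸ rfl)

lemma hook_prod (ν : YoungDiagram) (m : ℕ) (hm : ν.colLen 0 ≤ m) :
    (∏ c ∈ ν.cells, hook ν c) *
      (∏ i ∈ Finset.range m, ∏ j ∈ Finset.Ico (i+1) m, (Lf ν m i - Lf ν m j))
      = ∏ i ∈ Finset.range m, Nat.factorial (Lf ν m i) := by
  rw [cells_decomp ν m hm, Finset.prod_biUnion (rows_disj ν m), ← Finset.prod_mul_distrib]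
  apply Finset.prod_congr rfl
  intro i hi
  rw [Finset.prod_product, Finset.prod_singleton]
  exact row_prod ν m i hm (Finset.mem_range.mp hi)

lemma card_eq_sum_rowLens (ν : YoungDiagram) (m : ℕ) (hm : ν.colLen 0 ≤ m) :
    ν.card = ∑ i ∈ Finset.range m, ν.rowLen i := by
  show ν.cells.card = _
  rw [cells_decomp ν m hm, Finset.card_biUnion (rows_disj ν m)]
  apply Finset.sum_congr rfl
  intro i _
  rw [Finset.card_product, Finset.card_singleton, Finset.card_range, one_mul]

lemma rowLens_toYD {n : ℕ} (q : n.Partition) :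
    (toYD q).rowLens = q.parts.sort (· ≥ ·) :=
  YoungDiagram.rowLens_ofRowLens_eq_self
    (fun x hx => q.parts_pos (by rwa [Multiset.mem_sort] at hx))

lemma toYD_injective {n : ℕ} : Function.Injective (toYD (n := n)) := by
  intro q1 q2 h
  have h1 := congrArg YoungDiagram.rowLens h
  rw [rowLens_toYD, rowLens_toYD] at h1
  have h2 : q1.parts = q2.parts := by
    rw [← Multiset.sort_eq q1.parts (· ≥ ·), ← Multiset.sort_eq q2.parts (· ≥ ·), h1]
  cases q1; cases q2
  simpa using h2

lemma list_range_map_sum (k : ℕ) (f : ℕ → ℕ) :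
    ((List.range k).map f).sum = ∑ i ∈ Finset.range k, f i := by
  induction k with
  | zero => simp
  | succ k ih =>
    rw [List.range_succ, List.map_append, List.sum_append, Finset.sum_range_succ, ih]
    simp

lemma sum_rowLens (ν : YoungDiagram) : ν.rowLens.sum = ν.card := by
  rw [YoungDiagram.rowLens, list_range_map_sum,
    card_eq_sum_rowLens ν (ν.colLen 0) le_rfl]

lemma card_toYD {n : ℕ} (q : n.Partition) : (toYD q).card = n := by
  rw [← sum_rowLens, rowLens_toYD]
  have : ((q.parts.sort (· ≥ ·) : List ℕ) : Multiset ℕ).sum = q.parts.sum := by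
    rw [Multiset.sort_eq]
  rw [← Multiset.sum_coe, this, q.parts_sum]

def partOfYD (nn : ℕ) (ν : YoungDiagram) (h : ν.card = nn) : nn.Partition where
  parts := ↑ν.rowLens
  parts_pos := fun hi => ν.pos_of_mem_rowLens _ (by simpa using hi)
  parts_sum := by rw [Multiset.sum_coe, sum_rowLens, h]

lemma toYD_partOfYD (nn : ℕ) (ν : YoungDiagram) (h : ν.card = nn) :
    toYD (partOfYD nn ν h) = ν := by
  have hsort : Multiset.sort (ν.rowLens : Multiset ℕ) (· ≥ ·) = ν.rowLens :=
    List.Perm.eq_of_pairwise'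
      (Multiset.pairwise_sort _ _) (List.sortedGE_iff_pairwise.mp ν.rowLens_sorted)
      (Multiset.coe_eq_coe.mp (Multiset.sort_eq _ _))
  show YoungDiagram.ofRowLens _ _ = ν
  convert YoungDiagram.ofRowLens_to_rowLens_eq_self (μ := ν) using 2
  exact hsort

def addBox (μ : YoungDiagram) (i : ℕ) (h : i = 0 ∨ μ.rowLen i < μ.rowLen (i-1)) :
    YoungDiagram where
  cells := insert (i, μ.rowLen i) μ.cells
  isLowerSet := by
    rintro ⟨a2, b2⟩ ⟨a1, b1⟩ ⟨(ha : a1 ≤ a2), (hb : b1 ≤ b2)⟩ hcell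
    simp only [Finset.coe_insert, Set.mem_insert_iff, Finset.mem_coe,
      YoungDiagram.mem_cells, Prod.mk.injEq] at hcell ⊢
    rcases hcell with ⟨rfl, rfl⟩ | hcell
    · by_cases hb1 : b1 = μ.rowLen a2
      · subst hb1
        by_cases ha1 : a1 = a2
        · left; exact ⟨ha1, rfl⟩
        · right
          have hia : a1 < a2 := lt_of_le_of_ne ha ha1
          rcases h with rfl | h
          · omega
          · apply YoungDiagram.mem_iff_lt_rowLen.mpr
            have h2 : μ.rowLen (a2-1) ≤ μ.rowLen a1 := μ.rowLen_anti _ _ (by omega)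
            omega
      · right
        apply YoungDiagram.mem_iff_lt_rowLen.mpr
        have h2 : μ.rowLen a2 ≤ μ.rowLen a1 := μ.rowLen_anti _ _ ha
        omega
    · right
      exact μ.up_left_mem ha hb hcell

lemma cells_addBox (μ : YoungDiagram) (i : ℕ) (h : i = 0 ∨ μ.rowLen i < μ.rowLen (i-1)) :
    (addBox μ i h).cells = insert (i, μ.rowLen i) μ.cells := rfl

lemma addBox_proof_irrel (μ : YoungDiagram) (i : ℕ) (h h' : i = 0 ∨ μ.rowLen i < μ.rowLen (i-1)) :
    addBox μ i h = addBox μ i h' := rfl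

lemma corner_not_mem (μ : YoungDiagram) (i : ℕ) : (i, μ.rowLen i) ∉ μ.cells := by
  rw [YoungDiagram.mem_cells, YoungDiagram.mem_iff_lt_rowLen]
  omega

lemma mem_addBox (μ : YoungDiagram) (i : ℕ) (h : i = 0 ∨ μ.rowLen i < μ.rowLen (i-1))
    (c : ℕ × ℕ) : c ∈ addBox μ i h ↔ c = (i, μ.rowLen i) ∨ c ∈ μ := by
  rw [← YoungDiagram.mem_cells, cells_addBox, Finset.mem_insert, YoungDiagram.mem_cells]

lemma card_addBox (μ : YoungDiagram) (i : ℕ) (h : i = 0 ∨ μ.rowLen i < μ.rowLen (i-1)) :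
    (addBox μ i h).card = μ.card + 1 := by
  show (insert (i, μ.rowLen i) μ.cells).card = μ.cells.card + 1
  rw [Finset.card_insert_of_notMem (corner_not_mem μ i)]

lemma rowLen_eq_of (ν : YoungDiagram) (r N : ℕ) (h : ∀ j, (r, j) ∈ ν ↔ j < N) :
    ν.rowLen r = N := by
  have hN : ¬ (N < ν.rowLen r) := fun hc =>
    lt_irrefl N ((h N).mp (YoungDiagram.mem_iff_lt_rowLen.mpr hc))
  have h2 : ∀ k, k < N → k < ν.rowLen r := fun k hk =>
    YoungDiagram.mem_iff_lt_rowLen.mp ((h k).mpr hk)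
  by_cases hz : N = 0
  · omega
  · have := h2 (N-1) (by omega)
    omega

lemma rowLen_addBox (μ : YoungDiagram) (i : ℕ) (h : i = 0 ∨ μ.rowLen i < μ.rowLen (i-1))
    (j : ℕ) : (addBox μ i h).rowLen j = if j = i then μ.rowLen i + 1 else μ.rowLen j := by
  apply rowLen_eq_of
  intro b
  rw [mem_addBox]
  by_cases hj : j = i
  · subst hj
    rw [if_pos rfl]
    constructor
    · rintro (hc | hc)
      · rw [Prod.mk.injEq] at hc; omega
      · have := YoungDiagram.mem_iff_lt_rowLen.mp hc; omega
    · intro hb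
      by_cases hbe : b = μ.rowLen j
      · left; rw [hbe]
      · right; exact YoungDiagram.mem_iff_lt_rowLen.mpr (by omega)
  · rw [if_neg hj]
    constructor
    · rintro (hc | hc)
      · rw [Prod.mk.injEq] at hc; omega
      · exact YoungDiagram.mem_iff_lt_rowLen.mp hc
    · intro hb
      right; exact YoungDiagram.mem_iff_lt_rowLen.mpr hb

lemma addable_le (μ : YoungDiagram) (i : ℕ) (h : i = 0 ∨ μ.rowLen i < μ.rowLen (i-1)) :
    i ≤ μ.colLen 0 := by
  rcases h with rfl | h
  · omega
  · have hi : 0 < i := by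
      by_contra hc
      push_neg at hc
      interval_cases i
      simp at h
    have h1 : (i - 1, 0) ∈ μ := YoungDiagram.mem_iff_lt_rowLen.mpr (by omega)
    have h2 := YoungDiagram.mem_iff_lt_colLen.mp h1
    omega

lemma colLen_le_iff (ν : YoungDiagram) (k : ℕ) : ν.colLen 0 ≤ k ↔ (k, 0) ∉ ν := by
  rw [YoungDiagram.mem_iff_lt_colLen]
  omega

lemma colLen_addBox_le (μ : YoungDiagram) (i : ℕ)
    (h : i = 0 ∨ μ.rowLen i < μ.rowLen (i-1)) :
    (addBox μ i h).colLen 0 ≤ μ.colLen 0 + 1 := by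
  rw [colLen_le_iff, mem_addBox]
  push_neg
  constructor
  · have := addable_le μ i h
    intro hc
    rw [Prod.mk.injEq] at hc
    omega
  · rw [YoungDiagram.mem_iff_lt_colLen]
    omega

lemma exists_addBox {n : ℕ} (hn : 2 ≤ n) (μ : YoungDiagram) (hμ : μ.card = n - 1)
    (q : n.Partition) (hq : μ.cells ⊆ (toYD q).cells) :
    ∃ i, ∃ (h : i = 0 ∨ μ.rowLen i < μ.rowLen (i-1)), toYD q = addBox μ i h := by
  set ν := toYD q with hν
  have hcard : ν.card = n := card_toYD q
  have hdiff : (ν.cells \ μ.cells).card = 1 := by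
    rw [Finset.card_sdiff_of_subset hq]
    show ν.card - μ.card = 1
    omega
  obtain ⟨x, hx⟩ := Finset.card_eq_one.mp hdiff
  have hxmem : x ∈ ν.cells ∧ x ∉ μ.cells :=
    Finset.mem_sdiff.mp (hx ▸ Finset.mem_singleton_self x)
  have hcells : ν.cells = insert x μ.cells := by
    ext c
    constructor
    · intro hc
      by_cases hcμ : c ∈ μ.cells
      · exact Finset.mem_insert_of_mem hcμ
      · have hc2 : c ∈ ν.cells \ μ.cells := Finset.mem_sdiff.mpr ⟨hc, hcμ⟩
        rw [hx, Finset.mem_singleton] at hc2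
        rw [hc2]
        exact Finset.mem_insert_self _ _
    · intro hc
      rcases Finset.mem_insert.mp hc with rfl | hc
      · exact hxmem.1
      · exact hq hc
  obtain ⟨a, b⟩ := x
  have hb : b = μ.rowLen a := by
    have hbge : μ.rowLen a ≤ b := by
      by_contra hc
      exact hxmem.2 ((YoungDiagram.mem_cells _).mpr
        (YoungDiagram.mem_iff_lt_rowLen.mpr (by omega)))
    rcases eq_or_lt_of_le hbge with heq | hlt
    · exact heq.symm
    · exfalso
      have h1 : (a, μ.rowLen a) ∈ ν.cells := (YoungDiagram.mem_cells _).mpr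
        (ν.up_left_mem le_rfl (le_of_lt hlt) ((YoungDiagram.mem_cells _).mp hxmem.1))
      have h2 : (a, μ.rowLen a) ∈ ν.cells \ μ.cells :=
        Finset.mem_sdiff.mpr ⟨h1, corner_not_mem μ a⟩
      rw [hx, Finset.mem_singleton, Prod.mk.injEq] at h2
      omega
  subst hb
  have haddable : a = 0 ∨ μ.rowLen a < μ.rowLen (a-1) := by
    rcases Nat.eq_zero_or_pos a with rfl | hpos
    · left; rfl
    · right
      have h1 : (a - 1, μ.rowLen a) ∈ ν :=
        ν.up_left_mem (by omega) le_rfl ((YoungDiagram.mem_cells _).mp hxmem.1)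
      have h2 : (a - 1, μ.rowLen a) ∈ μ.cells := by
        have h3 : (a - 1, μ.rowLen a) ∈ insert (a, μ.rowLen a) μ.cells := by
          rw [← hcells]
          exact (YoungDiagram.mem_cells _).mpr h1
        rcases Finset.mem_insert.mp h3 with he | hm
        · rw [Prod.mk.injEq] at he; omega
        · exact hm
      exact YoungDiagram.mem_iff_lt_rowLen.mp ((YoungDiagram.mem_cells _).mp h2)
  refine ⟨a, haddable, ?_⟩
  apply YoungDiagram.ext
  rw [hcells, cells_addBox]

lemma erase_range_split (m i : ℕ) (him : i < m) :
    (Finset.range m).erase i = (Finset.range i) ∪ (Finset.Ico (i+1) m) := by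
  ext a
  simp only [Finset.mem_erase, Finset.mem_union, Finset.mem_range, Finset.mem_Ico]
  omega

lemma range_Ico_disjoint (m i : ℕ) : Disjoint (Finset.range i) (Finset.Ico (i+1) m) := by
  rw [Finset.disjoint_left]
  intro a ha hb
  rw [Finset.mem_range] at ha
  rw [Finset.mem_Ico] at hb
  omega

lemma pair_split (m i : ℕ) (him : i < m) (h : ℕ → ℚ) :
    ∏ a ∈ Finset.range m, ∏ b ∈ Finset.Ico (a+1) m, (h a - h b)
    = ((∏ a ∈ Finset.range i, ((h a - h i) *
          ∏ b ∈ (Finset.Ico (a+1) m).erase i, (h a - h b)))) *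
      ((∏ b ∈ Finset.Ico (i+1) m, (h i - h b)) *
        ∏ a ∈ Finset.Ico (i+1) m, ∏ b ∈ Finset.Ico (a+1) m, (h a - h b)) := by
  rw [← Finset.prod_range_mul_prod_Ico _ (le_of_lt him),
    Finset.prod_eq_prod_Ico_succ_bot him]
  congr 1
  apply Finset.prod_congr rfl
  intro a ha
  rw [Finset.mem_range] at ha
  exact (Finset.mul_prod_erase _ _ (by rw [Finset.mem_Ico]; omega)).symm

lemma pairprod_update (m i : ℕ) (him : i < m) (f g : ℕ → ℚ)
    (hfg : ∀ j, j ≠ i → f j = g j) :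
    (∏ a ∈ Finset.range m, ∏ b ∈ Finset.Ico (a+1) m, (f a - f b)) *
      (∏ j ∈ (Finset.range m).erase i, (g i - g j))
    = (∏ a ∈ Finset.range m, ∏ b ∈ Finset.Ico (a+1) m, (g a - g b)) *
      (∏ j ∈ (Finset.range m).erase i, (f i - f j)) := by
  rw [pair_split m i him f, pair_split m i him g, erase_range_split m i him,
    Finset.prod_union (range_Ico_disjoint m i), Finset.prod_union (range_Ico_disjoint m i)]
  -- replace f by g away from i
  have e1 : ∏ a ∈ Finset.range i, ((f a - f i) * ∏ b ∈ (Finset.Ico (a+1) m).erase i, (f a - f b))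
      = (∏ a ∈ Finset.range i, (g a - f i)) *
        ∏ a ∈ Finset.range i, ∏ b ∈ (Finset.Ico (a+1) m).erase i, (g a - g b) := by
    rw [← Finset.prod_mul_distrib]
    apply Finset.prod_congr rfl
    intro a ha
    rw [Finset.mem_range] at ha
    rw [hfg a (by omega)]
    congr 1
    apply Finset.prod_congr rfl
    intro b hb
    rw [Finset.mem_erase] at hb
    rw [hfg b hb.1]
  have e2 : ∏ a ∈ Finset.range i, ((g a - g i) * ∏ b ∈ (Finset.Ico (a+1) m).erase i, (g a - g b))
      = (∏ a ∈ Finset.range i, (g a - g i)) *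
        ∏ a ∈ Finset.range i, ∏ b ∈ (Finset.Ico (a+1) m).erase i, (g a - g b) := by
    rw [← Finset.prod_mul_distrib]
  have e3 : ∏ b ∈ Finset.Ico (i+1) m, (f i - f b) = ∏ b ∈ Finset.Ico (i+1) m, (f i - g b) := by
    apply Finset.prod_congr rfl
    intro b hb
    rw [Finset.mem_Ico] at hb
    rw [hfg b (by omega)]
  have e4 : ∏ a ∈ Finset.Ico (i+1) m, ∏ b ∈ Finset.Ico (a+1) m, (f a - f b)
      = ∏ a ∈ Finset.Ico (i+1) m, ∏ b ∈ Finset.Ico (a+1) m, (g a - g b) := by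
    apply Finset.prod_congr rfl
    intro a ha
    rw [Finset.mem_Ico] at ha
    apply Finset.prod_congr rfl
    intro b hb
    rw [Finset.mem_Ico] at hb
    rw [hfg a (by omega), hfg b (by omega)]
  have e5 : ∏ j ∈ Finset.range i, (f i - f j) = ∏ j ∈ Finset.range i, (f i - g j) := by
    apply Finset.prod_congr rfl
    intro a ha
    rw [Finset.mem_range] at ha
    rw [hfg a (by omega)]
  rw [e1, e2, e3, e4, e5]
  have hcomb : (∏ a ∈ Finset.range i, (g a - f i)) * (∏ a ∈ Finset.range i, (g i - g a))
      = (∏ a ∈ Finset.range i, (g a - g i)) * (∏ a ∈ Finset.range i, (f i - g a)) := by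
    rw [← Finset.prod_mul_distrib, ← Finset.prod_mul_distrib]
    apply Finset.prod_congr rfl
    intro a _
    ring
  linear_combination ((∏ a ∈ Finset.range i, ∏ b ∈ (Finset.Ico (a+1) m).erase i, (g a - g b)) *
    (∏ b ∈ Finset.Ico (i+1) m, (f i - g b)) * (∏ b ∈ Finset.Ico (i+1) m, (g i - g b)) *
    (∏ a ∈ Finset.Ico (i+1) m, ∏ b ∈ Finset.Ico (a+1) m, (g a - g b))) * hcomb

lemma hook_pos (μ : YoungDiagram) (c : ℕ × ℕ) : 0 < hook μ c := Nat.succ_pos _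

lemma cast_pairprod (ν : YoungDiagram) (m : ℕ) :
    (((∏ a ∈ Finset.range m, ∏ b ∈ Finset.Ico (a+1) m, (Lf ν m a - Lf ν m b)) : ℕ) : ℚ)
    = ∏ a ∈ Finset.range m, ∏ b ∈ Finset.Ico (a+1) m, ((Lf ν m a : ℚ) - Lf ν m b) := by
  rw [Nat.cast_prod]
  apply Finset.prod_congr rfl
  intro a ha
  rw [Nat.cast_prod]
  apply Finset.prod_congr rfl
  intro b hb
  rw [Finset.mem_Ico] at hb
  rw [Nat.cast_sub (le_of_lt (Lf_lt ν m (by omega) hb.2))]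

lemma hookprod_cast (ν : YoungDiagram) (m : ℕ) (hm : ν.colLen 0 ≤ m) :
    (∏ c ∈ ν.cells, (hook ν c : ℚ)) *
      (∏ a ∈ Finset.range m, ∏ b ∈ Finset.Ico (a+1) m, ((Lf ν m a : ℚ) - Lf ν m b))
    = ∏ j ∈ Finset.range m, ((Lf ν m j).factorial : ℚ) := by
  have h := congrArg (fun t : ℕ => (t : ℚ)) (hook_prod ν m hm)
  rw [Nat.cast_mul, cast_pairprod ν m, Nat.cast_prod, Nat.cast_prod] at h
  exact h

set_option maxHeartbeats 1000000 in
lemma term_eq {n : ℕ} (hn : 2 ≤ n) (μ : YoungDiagram) (hμ : μ.card = n - 1)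
    (i : ℕ) (hadd : i = 0 ∨ μ.rowLen i < μ.rowLen (i-1)) :
    dimSYT (addBox μ i hadd) / (n * dimSYT μ) * ((content (i, μ.rowLen i) : ℤ) : ℚ)
    = ((Lf μ (μ.colLen 0 + 1) i : ℚ) + 1 - (μ.colLen 0 + 1)) *
        (∏ j ∈ (Finset.range (μ.colLen 0 + 1)).erase i,
          ((Lf μ (μ.colLen 0 + 1) i : ℚ) + 1 - Lf μ (μ.colLen 0 + 1) j)) /
      (((Lf μ (μ.colLen 0 + 1) i : ℚ) + 1) *
        ∏ j ∈ (Finset.range (μ.colLen 0 + 1)).erase i,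
          ((Lf μ (μ.colLen 0 + 1) i : ℚ) - Lf μ (μ.colLen 0 + 1) j)) := by
  set m := μ.colLen 0 + 1 with hm_def
  set lam := addBox μ i hadd with hlam_def
  set L : ℕ → ℕ := Lf μ m with hL_def
  have him : i < m := by have := addable_le μ i hadd; omega
  have hcolμ : μ.colLen 0 ≤ m := by omega
  have hcoll : lam.colLen 0 ≤ m := colLen_addBox_le μ i hadd
  have hcardl : lam.card = n := by rw [hlam_def, card_addBox, hμ]; omega
  have hLlam : ∀ j, Lf lam m j = if j = i then L i + 1 else L j := by
    intro j
    rw [hlam_def]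
    show (addBox μ i hadd).rowLen j + (m - 1 - j) = _
    rw [rowLen_addBox]
    split_ifs with hj
    · subst hj
      show μ.rowLen j + 1 + (m - 1 - j) = Lf μ m j + 1
      unfold Lf
      omega
    · rfl
  -- L i + 1 < L j for j < i
  have hLgt : ∀ j, j < i → L i + 1 < L j := by
    intro j hj
    rcases hadd with rfl | hadd
    · omega
    · have h1 : μ.rowLen (i-1) ≤ μ.rowLen j := μ.rowLen_anti _ _ (by omega)
      rw [hL_def]
      unfold Lf
      omega
  set Eμ : ℚ := ∏ j ∈ (Finset.range m).erase i, ((L i : ℚ) - L j) with hEμ_def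
  set El : ℚ := ∏ j ∈ (Finset.range m).erase i, ((L i : ℚ) + 1 - L j) with hEl_def
  set Qμ : ℚ := ∏ a ∈ Finset.range m, ∏ b ∈ Finset.Ico (a+1) m, ((L a : ℚ) - L b) with hQμ_def
  set Ql : ℚ := ∏ a ∈ Finset.range m, ∏ b ∈ Finset.Ico (a+1) m,
    ((Lf lam m a : ℚ) - Lf lam m b) with hQl_def
  set Fμ : ℚ := ∏ j ∈ Finset.range m, ((L j).factorial : ℚ) with hFμ_def
  set Fl : ℚ := ∏ j ∈ Finset.range m, ((Lf lam m j).factorial : ℚ) with hFl_def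
  set Hμ : ℚ := ∏ c ∈ μ.cells, (hook μ c : ℚ) with hHμ_def
  set Hl : ℚ := ∏ c ∈ lam.cells, (hook lam c : ℚ) with hHl_def
  have hμQ : Hμ * Qμ = Fμ := hookprod_cast μ m hcolμ
  have hlQ : Hl * Ql = Fl := hookprod_cast lam m hcoll
  -- nonvanishing
  have hHμpos : 0 < Hμ := Finset.prod_pos fun c _ => by exact_mod_cast hook_pos μ c
  have hHlpos : 0 < Hl := Finset.prod_pos fun c _ => by exact_mod_cast hook_pos lam c
  have hQμpos : 0 < Qμ := by
    apply Finset.prod_pos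
    intro a ha
    apply Finset.prod_pos
    intro b hb
    rw [Finset.mem_Ico] at hb
    have := Lf_lt μ m (show a < b by omega) hb.2
    rw [sub_pos]
    exact_mod_cast this
  have hQlpos : 0 < Ql := by
    apply Finset.prod_pos
    intro a ha
    apply Finset.prod_pos
    intro b hb
    rw [Finset.mem_Ico] at hb
    have := Lf_lt lam m (show a < b by omega) hb.2
    rw [sub_pos]
    exact_mod_cast this
  have hEμne : Eμ ≠ 0 := by
    apply Finset.prod_ne_zero_iff.mpr
    intro j hj
    rw [Finset.mem_erase, Finset.mem_range] at hj
    rw [sub_ne_zero]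
    have : L i ≠ L j := by
      rcases lt_trichotomy j i with h | h | h
      · exact (Lf_lt μ m h him).ne
      · exact absurd h hj.1
      · exact (Lf_lt μ m h hj.2).ne'
    exact_mod_cast this
  have hElne : El ≠ 0 := by
    apply Finset.prod_ne_zero_iff.mpr
    intro j hj
    rw [Finset.mem_erase, Finset.mem_range] at hj
    have : L j ≠ L i + 1 := by
      rcases lt_trichotomy j i with h | h | h
      · exact (hLgt j h).ne'
      · exact absurd h hj.1
      · have h2 : L j < L i := Lf_lt μ m h hj.2
        omega
    intro hc
    apply this
    have : (L j : ℚ) = (L i : ℚ) + 1 := by linarith [sub_eq_zero.mp hc]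
    exact_mod_cast this
  -- pair identity
  have hpair : Ql * Eμ = Qμ * El := by
    have hp := pairprod_update m i him (fun j => (Lf lam m j : ℚ)) (fun j => (L j : ℚ))
      (fun j hj => by
        show ((Lf lam m j : ℕ) : ℚ) = ((L j : ℕ) : ℚ)
        rw [hLlam j, if_neg hj])
    have he : ∏ j ∈ (Finset.range m).erase i, ((Lf lam m i : ℚ) - Lf lam m j) = El := by
      rw [hEl_def]
      apply Finset.prod_congr rfl
      intro j hj
      rw [Finset.mem_erase] at hj
      rw [hLlam j, if_neg hj.1, hLlam i, if_pos rfl]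
      push_cast
      ring
    rw [he] at hp
    exact hp
  have hFl : Fl = ((L i : ℚ) + 1) * Fμ := by
    rw [hFl_def, hFμ_def, ← Finset.mul_prod_erase _ _ (Finset.mem_range.mpr him),
      ← Finset.mul_prod_erase _ _ (Finset.mem_range.mpr him)]
    have h1 : ∏ j ∈ (Finset.range m).erase i, ((Lf lam m j).factorial : ℚ)
        = ∏ j ∈ (Finset.range m).erase i, ((L j).factorial : ℚ) := by
      apply Finset.prod_congr rfl
      intro j hj
      rw [Finset.mem_erase] at hj
      rw [hLlam j, if_neg hj.1]
    rw [h1, hLlam i, if_pos rfl, Nat.factorial_succ]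
    push_cast
    ring
  have hdimμ : dimSYT μ = (((n-1).factorial : ℕ) : ℚ) / Hμ := by
    unfold dimSYT
    rw [hμ, hHμ_def]
  have hdiml : dimSYT lam = ((n.factorial : ℕ) : ℚ) / Hl := by
    unfold dimSYT
    rw [hcardl, hHl_def]
  have hcast : (L i : ℚ) = (μ.rowLen i : ℚ) + (μ.colLen 0 : ℚ) - i := by
    have h2 : L i = μ.rowLen i + (μ.colLen 0 - i) := by
      show Lf μ m i = _
      rw [hm_def]
      unfold Lf
      omega
    rw [h2, Nat.cast_add, Nat.cast_sub (by omega : i ≤ μ.colLen 0)]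
    ring
  have hcont : ((content (i, μ.rowLen i) : ℤ) : ℚ)
      = (L i : ℚ) + 1 - ((μ.colLen 0 : ℚ) + 1) := by
    show (((μ.rowLen i : ℤ) - i : ℤ) : ℚ) = _
    push_cast
    rw [hcast]
    ring
  have hnfac : ((n.factorial : ℕ) : ℚ) = (n : ℚ) * (((n-1).factorial : ℕ) : ℚ) := by
    rw [← Nat.mul_factorial_pred (by omega : n ≠ 0)]
    push_cast [Nat.cast_mul]
    ring
  have hHμ_eq : Hμ = Fμ / Qμ := by
    rw [eq_div_iff hQμpos.ne']
    exact hμQ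
  have hHl_eq : Hl = Fl / Ql := by
    rw [eq_div_iff hQlpos.ne']
    exact hlQ
  rw [hdiml, hdimμ, hcont, hHμ_eq, hHl_eq, hnfac, hFl]
  have hFμne : Fμ ≠ 0 := by
    apply Finset.prod_ne_zero_iff.mpr
    intro j _
    exact_mod_cast (Nat.factorial_pos _).ne'
  have hfacne : (((n-1).factorial : ℕ) : ℚ) ≠ 0 := by
    exact_mod_cast (Nat.factorial_pos _).ne'
  have hnne : (n : ℚ) ≠ 0 := by
    have : (0:ℚ) < n := by exact_mod_cast (by omega : 0 < n)
    exact this.ne'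
  have hLi1ne : (L i : ℚ) + 1 ≠ 0 := by positivity
  field_simp
  linear_combination ((L i : ℚ) - (μ.colLen 0 : ℚ)) * hpair


section KeyId
open Polynomial
private lemma basis_coeff {s : Finset ℕ} (v : ℕ → ℚ) (hv : Set.InjOn v s) {i : ℕ} (hi : i ∈ s) :
    (Lagrange.basis s v i).coeff (#s - 1) = (∏ j ∈ s.erase i, (v i - v j))⁻¹ := by
  have hd := Lagrange.natDegree_basis hv hi
  rw [← hd, Polynomial.coeff_natDegree]
  unfold Lagrange.basis
  rw [Polynomial.leadingCoeff_prod, ← Finset.prod_inv_distrib]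
  apply Finset.prod_congr rfl
  intro j hj
  unfold Lagrange.basisDivisor
  rw [Polynomial.leadingCoeff_mul, Polynomial.leadingCoeff_C,
    Polynomial.leadingCoeff_X_sub_C, mul_one]

lemma lagrange_coeff_sum {s : Finset ℕ} (v : ℕ → ℚ) (hv : Set.InjOn v s)
    (f : Polynomial ℚ) (hf : f.degree < ((#s - 1 : ℕ) : WithBot ℕ)) :
    ∑ i ∈ s, f.eval (v i) * (∏ j ∈ s.erase i, (v i - v j))⁻¹ = 0 := by
  have hf' : f.degree < (#s : WithBot ℕ) :=
    hf.trans_le (by exact_mod_cast Nat.sub_le _ _)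
  have h := Lagrange.eq_interpolate hv hf'
  have hc := congrArg (fun p => Polynomial.coeff p (#s - 1)) h
  simp only [Lagrange.interpolate_apply, Polynomial.finset_sum_coeff,
    Polynomial.coeff_C_mul] at hc
  rw [Polynomial.coeff_eq_zero_of_degree_lt hf] at hc
  rw [show (0:ℚ) = ∑ x ∈ s, eval (v x) f * (Lagrange.basis s v x).coeff (#s - 1) from hc]
  apply Finset.sum_congr rfl
  intro i hi
  rw [basis_coeff v hv hi]

lemma keyIdentity (m : ℕ) (hm : 1 ≤ m) (L : ℕ → ℕ)
    (hL : ∀ i j, i < j → j < m → L j < L i) (hL0 : L (m - 1) = 0) :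
    ∑ i ∈ range m, ((L i : ℚ) + 1 - m) * (∏ j ∈ (range m).erase i, ((L i : ℚ) + 1 - L j)) /
      (((L i : ℚ) + 1) * ∏ j ∈ (range m).erase i, ((L i : ℚ) - L j)) = 0 := by
  classical
  set v : ℕ → ℚ := fun j => if j < m then (L j : ℚ) else -1 with hv_def
  set u : ℕ → ℚ := fun j => if j < m then (L j : ℚ) - 1 else (m : ℚ) - 1 with hu_def
  set s : Finset ℕ := range (m + 1) with hs_def
  have hcard : #s = m + 1 := by simp [hs_def]
  -- injectivity of v on s
  have hLinj : ∀ a b, a < m → b < m → L a = L b → a = b := by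
    intro a b ha hb hab
    rcases lt_trichotomy a b with h | h | h
    · exact absurd hab (Nat.ne_of_gt (hL a b h hb))
    · exact h
    · exact absurd hab.symm (Nat.ne_of_gt (hL b a h ha))
  have hv : Set.InjOn v s := by
    intro a ha b hb hab
    simp only [hs_def, Finset.coe_range, Set.mem_Iio] at ha hb
    by_cases h1 : a < m <;> by_cases h2 : b < m <;>
      simp only [hv_def, h1, h2, if_pos, if_neg, if_true, if_false] at hab
    · exact hLinj a b h1 h2 (by exact_mod_cast hab)
    · have : (0:ℚ) ≤ (L a : ℚ) := Nat.cast_nonneg _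
      linarith
    · have : (0:ℚ) ≤ (L b : ℚ) := Nat.cast_nonneg _
      linarith
    · omega
  set N : Polynomial ℚ := ∏ j ∈ s, (X - C (u j)) with hN_def
  set D : Polynomial ℚ := ∏ j ∈ s, (X - C (v j)) with hD_def
  have hNm : N.Monic := monic_prod_of_monic _ _ fun i _ => monic_X_sub_C _
  have hDm : D.Monic := monic_prod_of_monic _ _ fun i _ => monic_X_sub_C _
  have hNdeg : N.natDegree = m + 1 := by
    rw [hN_def, natDegree_prod _ _ fun i _ => X_sub_C_ne_zero _]
    simp [hcard]
  have hDdeg : D.natDegree = m + 1 := by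
    rw [hD_def, natDegree_prod _ _ fun i _ => X_sub_C_ne_zero _]
    simp [hcard]
  have hsum : ∑ j ∈ s, u j = ∑ j ∈ s, v j := by
    rw [hs_def, Finset.sum_range_succ, Finset.sum_range_succ]
    have h1 : ∀ j ∈ range m, u j = (L j : ℚ) - 1 := by
      intro j hj; simp [hu_def, Finset.mem_range.mp hj]
    have h2 : ∀ j ∈ range m, v j = (L j : ℚ) := by
      intro j hj; simp [hv_def, Finset.mem_range.mp hj]
    rw [Finset.sum_congr rfl h1, Finset.sum_congr rfl h2]
    have : u m = (m : ℚ) - 1 := by simp [hu_def]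
    have hvm : v m = -1 := by simp [hv_def]
    rw [this, hvm, Finset.sum_sub_distrib]
    simp
    ring
  have hfdeg : (N - D).degree < ((#s - 1 : ℕ) : WithBot ℕ) := by
    rw [hcard]
    simp only [Nat.add_sub_cancel]
    rw [Polynomial.degree_lt_iff_coeff_zero]
    intro k hk
    have hk' : m ≤ k := by exact_mod_cast hk
    rw [Polynomial.coeff_sub]
    rcases eq_or_lt_of_le hk' with h | h
    · -- k = m : use prod_X_sub_C_coeff_card_pred
      have hc1 := Polynomial.prod_X_sub_C_coeff_card_pred s u (by rw [hcard]; omega)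
      have hc2 := Polynomial.prod_X_sub_C_coeff_card_pred s v (by rw [hcard]; omega)
      rw [hcard] at hc1 hc2
      simp only [Nat.add_sub_cancel] at hc1 hc2
      obtain rfl := h
      rw [hN_def, hD_def, hc1, hc2, hsum, sub_self]
    · rcases eq_or_lt_of_le (Nat.succ_le_of_lt h) with h2 | h2
      · obtain rfl := h2
        have e1 : N.coeff (m + 1) = 1 := by rw [← hNdeg]; exact hNm.coeff_natDegree
        have e2 : D.coeff (m + 1) = 1 := by rw [← hDdeg]; exact hDm.coeff_natDegree
        rw [show m.succ = m + 1 from rfl, e1, e2, sub_self]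
      · rw [Polynomial.coeff_eq_zero_of_natDegree_lt (by omega : N.natDegree < k),
          Polynomial.coeff_eq_zero_of_natDegree_lt (by omega : D.natDegree < k), sub_self]
  have H := lagrange_coeff_sum v hv (N - D) hfdeg
  rw [show s = range (m+1) from hs_def, Finset.sum_range_succ] at H
  have hvm : v m = -1 := by simp [hv_def]
  have hm0 : eval (v m) (N - D) = 0 := by
    rw [eval_sub]
    have e1 : eval (v m) N = 0 := by
      rw [hN_def, eval_prod]
      apply Finset.prod_eq_zero (i := m - 1) (by simp [hs_def])
      have hu1 : u (m-1) = (L (m-1) : ℚ) - 1 := by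
        simp only [hu_def]; rw [if_pos (by omega)]
      simp [hvm, hu1, hL0]
    have e2 : eval (v m) D = 0 := by
      rw [hD_def, eval_prod]
      apply Finset.prod_eq_zero (i := m) (by simp [hs_def])
      simp
    rw [e1, e2, sub_self]
  rw [hm0, zero_mul, add_zero] at H
  rw [← H]
  apply Finset.sum_congr rfl
  intro i hi
  have him : i < m := mem_range.mp hi
  have his : i ∈ s := by simp [hs_def]; omega
  have hvi : v i = (L i : ℚ) := by simp only [hv_def]; rw [if_pos him]
  have hD0 : eval (v i) D = 0 := by
    rw [hD_def, eval_prod]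
    exact Finset.prod_eq_zero his (by simp)
  have hNval : eval (v i) N
      = ((L i:ℚ) + 1 - m) * ∏ j ∈ (range m).erase i, ((L i:ℚ) + 1 - L j) := by
    rw [hN_def, eval_prod]
    have : ∀ j, eval (v i) (X - C (u j)) = v i - u j := by intro j; simp
    rw [show s = range (m+1) from hs_def, Finset.prod_range_succ]
    have e1 : ∀ j ∈ range m, eval (v i) (X - C (u j)) = (L i:ℚ) + 1 - L j := by
      intro j hj
      have hjm : j < m := mem_range.mp hj
      have : u j = (L j : ℚ) - 1 := by simp only [hu_def]; rw [if_pos hjm]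
      rw [this, eval_sub, eval_X, eval_C, hvi]; ring
    rw [Finset.prod_congr rfl e1]
    have e2 : eval (v i) (X - C (u m)) = (L i:ℚ) + 1 - m := by
      have : u m = (m : ℚ) - 1 := by simp [hu_def]
      rw [this, eval_sub, eval_X, eval_C, hvi]; ring
    rw [e2, ← Finset.mul_prod_erase _ _ hi]
    have : (L i:ℚ) + 1 - L i = 1 := by ring
    rw [this, one_mul]
    ring
  have hsplit : ((range (m+1)).erase i) = insert m ((range m).erase i) := by
    ext a; simp only [Finset.mem_erase, Finset.mem_range, Finset.mem_insert]; omega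
  have hden : ∏ j ∈ s.erase i, (v i - v j)
      = ((L i:ℚ) + 1) * ∏ j ∈ (range m).erase i, ((L i:ℚ) - L j) := by
    rw [show s = range (m+1) from hs_def, hsplit,
      Finset.prod_insert (by simp), hvi, hvm]
    congr 1
    · ring
    · apply Finset.prod_congr rfl
      intro j hj
      have hjm : j < m := mem_range.mp (Finset.mem_of_mem_erase hj)
      simp only [hv_def]; rw [if_pos hjm]
  rw [eval_sub, hD0, sub_zero, hNval, hden, div_eq_mul_inv]

end KeyId

lemma row_spec {n : ℕ} (hn : 2 ≤ n) (μ : YoungDiagram) (hμ : μ.card = n - 1)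
    (q : n.Partition) (hq : μ.cells ⊆ (toYD q).cells) :
    ∃ i, ∃ (h : i = 0 ∨ μ.rowLen i < μ.rowLen (i-1)),
      toYD q = addBox μ i h ∧ (toYD q).cells \ μ.cells = {(i, μ.rowLen i)} ∧
      (∑ c ∈ (toYD q).cells \ μ.cells, c.1) = i := by
  obtain ⟨i, h, hYD⟩ := exists_addBox hn μ hμ q hq
  have hsd : (toYD q).cells \ μ.cells = {(i, μ.rowLen i)} := by
    rw [hYD, cells_addBox]
    ext c
    simp only [Finset.mem_sdiff, Finset.mem_insert, Finset.mem_singleton]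
    constructor
    · rintro ⟨hc | hc, hnc⟩
      · exact hc
      · exact absurd hc hnc
    · rintro rfl
      exact ⟨Or.inl rfl, corner_not_mem μ i⟩
  exact ⟨i, h, hYD, hsd, by rw [hsd, Finset.sum_singleton]⟩

set_option maxHeartbeats 1000000 in
/-- Under Kerov's growth process, for any partition `μ` of `n - 1 ≥ 1`, the conditional
expectation of `X_n` given `λ(n-1) = μ` equals `0`:
`∑_{x addable to μ} [dim(μ+x)/(n·dim(μ))]·c(x) = 0`. -/
theorem stmt10 (n : ℕ) (hn : 2 ≤ n) (μ : YoungDiagram) (hμ : μ.card = n - 1) :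
    ∑ q : n.Partition,
      (if μ.cells ⊆ (toYD q).cells then
        dimSYT (toYD q) / (n * dimSYT μ) *
          ((∑ c ∈ (toYD q).cells \ μ.cells, content c : ℤ) : ℚ)
      else 0)
      = 0 := by
  classical
  set m := μ.colLen 0 + 1 with hm_def
  have hL0 : Lf μ m (m - 1) = 0 := by
    have h1 : μ.rowLen (μ.colLen 0) = 0 := by
      by_contra hc
      have h2 : (μ.colLen 0, 0) ∈ μ := YoungDiagram.mem_iff_lt_rowLen.mpr (by omega)
      have h3 := YoungDiagram.mem_iff_lt_colLen.mp h2
      omega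
    show μ.rowLen (m-1) + (m - 1 - (m-1)) = 0
    rw [hm_def]
    simp [h1]
  have hkey := keyIdentity m (by omega) (Lf μ m)
    (fun a b hab hb => Lf_lt μ m hab hb) hL0
  have hmq : (m : ℚ) = (μ.colLen 0 : ℚ) + 1 := by
    rw [hm_def]
    push_cast
    ring
  rw [hmq] at hkey
  rw [← Finset.sum_filter]
  rw [show (0:ℚ) = ∑ i ∈ Finset.range m,
      ((Lf μ m i : ℚ) + 1 - ((μ.colLen 0 : ℚ) + 1)) *
        (∏ j ∈ (Finset.range m).erase i, ((Lf μ m i : ℚ) + 1 - Lf μ m j)) /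
      (((Lf μ m i : ℚ) + 1) *
        ∏ j ∈ (Finset.range m).erase i, ((Lf μ m i : ℚ) - Lf μ m j)) from hkey.symm]
  have hAsub : (Finset.range m).filter (fun i => i = 0 ∨ μ.rowLen i < μ.rowLen (i-1))
      ⊆ Finset.range m := Finset.filter_subset _ _
  rw [← Finset.sum_subset hAsub (by
    intro i hi hni
    rw [Finset.mem_range] at hi
    rw [Finset.mem_filter] at hni
    push_neg at hni
    have hadd' := hni (Finset.mem_range.mpr hi)
    have hi0 : i ≠ 0 := hadd'.1
    have hrow : μ.rowLen i = μ.rowLen (i-1) := by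
      have := μ.rowLen_anti (i-1) i (by omega)
      have := hadd'.2
      omega
    have hLeq : Lf μ m (i-1) = Lf μ m i + 1 := by
      unfold Lf
      omega
    have hfac : ((Lf μ m i : ℚ) + 1 - Lf μ m (i-1)) = 0 := by
      rw [hLeq]
      push_cast
      ring
    have hz : ∏ j ∈ (Finset.range m).erase i, ((Lf μ m i : ℚ) + 1 - Lf μ m j) = 0 :=
      Finset.prod_eq_zero (Finset.mem_erase.mpr ⟨by omega, Finset.mem_range.mpr (by omega)⟩) hfac
    rw [hz, mul_zero, zero_div])]
  refine Finset.sum_bij' (fun q _ => ∑ c ∈ (toYD q).cells \ μ.cells, c.1)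
    (fun i hi => partOfYD n (addBox μ i (Finset.mem_filter.mp hi).2)
      (by rw [card_addBox, hμ]; omega)) ?_ ?_ ?_ ?_ ?_
  · -- hi : forward maps into A
    intro q hq
    beta_reduce
    obtain ⟨i, h, hYD, hsd, hrow⟩ := row_spec hn μ hμ q (Finset.mem_filter.mp hq).2
    rw [hrow, Finset.mem_filter, Finset.mem_range]
    have := addable_le μ i h
    exact ⟨by omega, h⟩
  · -- hj : backward maps into filter
    intro i hi
    beta_reduce
    rw [Finset.mem_filter]
    refine ⟨Finset.mem_univ _, ?_⟩
    rw [toYD_partOfYD, cells_addBox]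
    exact Finset.subset_insert _ _
  · -- left_inv
    intro q hq
    beta_reduce
    obtain ⟨i, h, hYD, hsd, hrow⟩ := row_spec hn μ hμ q (Finset.mem_filter.mp hq).2
    apply toYD_injective
    rw [toYD_partOfYD]
    apply YoungDiagram.ext
    rw [cells_addBox, hrow, hYD, cells_addBox]
  · -- right_inv
    intro i hi
    beta_reduce
    have hYD := toYD_partOfYD n (addBox μ i (Finset.mem_filter.mp hi).2)
      (by rw [card_addBox, hμ]; omega)
    rw [hYD, cells_addBox]
    have hsd : insert (i, μ.rowLen i) μ.cells \ μ.cells = {(i, μ.rowLen i)} := by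
      ext c
      simp only [Finset.mem_sdiff, Finset.mem_insert, Finset.mem_singleton]
      constructor
      · rintro ⟨hc | hc, hnc⟩
        · exact hc
        · exact absurd hc hnc
      · rintro rfl
        exact ⟨Or.inl rfl, corner_not_mem μ i⟩
    rw [hsd, Finset.sum_singleton]
  · -- values
    intro q hq
    beta_reduce
    obtain ⟨i, h, hYD, hsd, hrow⟩ := row_spec hn μ hμ q (Finset.mem_filter.mp hq).2
    rw [hrow, hsd, Finset.sum_singleton, hYD]
    exact term_eq hn μ hμ i h
end
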